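/- Group property of the nonlinear correlation dynamics: define on sequences f = (f_s)_{s≥1} of trace class operators the nonlinear map (𝔄_t(f))_n = Σ_{P:(1,...,n)=∪X_i} 𝔄_{|P|}(t,{X_1},...,{X_{|P|}}) S_n^± Π_i f_{|X_i|}(X_i), where 𝔄_{|P|}(t) is the cluster cumulant built from the groups G(−t). Then 𝔄_{t₁}(𝔄_{t₂}(f)) = 𝔄_{t₁+t₂}(f) for all real t₁, t₂. -/

import Mathlib

open Finset

/-- The nonlinear correlation dynamics `𝔄_t(f)` on families of (commuting) particle
observables: `(𝔄_t(f))(Y) = Σ_{P : partition of Y} 𝔄_{|P|}(t,{X_1},…,{X_{|P|}})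
applied to Π_i f(X_i)`, where the cluster cumulant is
`𝔄_{|P|}(t,…) = Σ_{P' : partition of the set of blocks of P}
(−1)^{|P'|−1}(|P'|−1)! Π_k G(θ(Z_k))(−t)`, the declusterization `θ(Z)` of a set of
blocks `Z` being the union of its blocks, and each group `G(θ(Z_k))(−t)` acting on
the sub-product `Π_{X ∈ Z_k} f(X)`. -/
noncomputable def clusterCumulantMap {α A : Type*} [DecidableEq α] [CommRing A]
    (G : Finset α → ℝ → (A →+ A)) (t : ℝ) (f : Finset α → A) (Y : Finset α) : A :=
  ∑ P : Finpartition Y, ∑ Q : Finpartition P.parts,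
    ((-1 : A) ^ (Q.parts.card - 1) * ((Q.parts.card - 1).factorial : A)) *
      ∏ Z ∈ Q.parts, G (Z.sup id) t (∏ X ∈ Z, f X)

namespace ClusterProofAux

variable {β : Type*} [DecidableEq β] {A : Type*} [CommRing A]

/-- cumulant coefficient -/
def cc (A : Type*) [CommRing A] (n : ℕ) : A :=
  (-1 : A) ^ (n - 1) * ((n - 1).factorial : A)

/-- Remove one part from a finpartition of a finset. -/
def erasePart {S : Finset β} (C : Finpartition S) (T : Finset β) (hT : T ∈ C.parts) :
    Finpartition (S \ T) where
  parts := C.parts.erase T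
  supIndep := C.supIndep.subset (erase_subset _ _)
  sup_parts := by
    apply le_antisymm
    · refine Finset.sup_le fun X hX => ?_
      have hX' := mem_of_mem_erase hX
      have hne : X ≠ T := ne_of_mem_erase hX
      refine le_sdiff.2 ⟨C.le hX', ?_⟩
      exact C.disjoint hX' hT hne
    · intro x hx
      have hxS : x ∈ S := (mem_sdiff.1 hx).1
      have hxT : x ∉ T := (mem_sdiff.1 hx).2
      obtain ⟨X, hX, hxX⟩ := C.exists_mem hxS
      have : X ≠ T := fun h => hxT (h ▸ hxX)
      exact mem_sup.2 ⟨X, mem_erase.2 ⟨this, hX⟩, hxX⟩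
  bot_notMem := fun h => C.bot_notMem (mem_of_mem_erase h)

/-- Insert a set `T` as a part into a partition of `S \ T`. -/
def insertPart {S T : Finset β} (hTS : T ⊆ S) (hT : T.Nonempty) (D : Finpartition (S \ T)) :
    Finpartition S :=
  D.extend (b := T) (by simpa [Finset.bot_eq_empty] using hT.ne_empty)
    sdiff_disjoint (by rw [sup_eq_union]; exact sdiff_union_of_subset hTS)

@[simp] lemma insertPart_parts {S T : Finset β} (hTS : T ⊆ S) (hT : T.Nonempty)
    (D : Finpartition (S \ T)) : (insertPart hTS hT D).parts = insert T D.parts := rfl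

lemma not_mem_parts_sdiff {S T : Finset β} (hT : T.Nonempty) (D : Finpartition (S \ T)) :
    T ∉ D.parts := by
  intro h
  obtain ⟨a, ha⟩ := hT
  have := D.le h ha
  exact (mem_sdiff.1 this).2 ha

/-- Decomposition of the sum over partitions of `S` according to the part containing `a`. -/
lemma sum_finpartition_decomp {M : Type*} [AddCommMonoid M] {S : Finset β} {a : β} (ha : a ∈ S)
    (g : Finset (Finset β) → M) :
    ∑ C : Finpartition S, g C.parts
      = ∑ T ∈ S.powerset.filter (fun T => a ∈ T),
          ∑ D : Finpartition (S \ T), g (insert T D.parts) := by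
  refine Eq.trans ?_ (Finset.sum_sigma (f := fun x => g (insert x.1 x.2.parts))
    (S.powerset.filter (fun T => a ∈ T)) (fun T => (univ : Finset (Finpartition (S \ T)))))
  refine Finset.sum_bij' (i := fun C _ => ⟨C.part a, erasePart C (C.part a) (C.part_mem.2 ha)⟩)
    (j := fun x hx => insertPart (S := S) (T := x.1) ?_ ?_ x.2) ?_ ?_ ?_ ?_ ?_
  · exact mem_powerset.1 (mem_filter.1 (mem_sigma.1 hx).1).1
  · exact ⟨a, (mem_filter.1 (mem_sigma.1 hx).1).2⟩
  · intro C _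
    refine mem_sigma.2 ⟨mem_filter.2 ⟨mem_powerset.2 (C.le (C.part_mem.2 ha)), C.mem_part ha⟩, mem_univ _⟩
  · intro x hx; exact mem_univ _
  · intro C _
    apply Finpartition.ext
    show insert (C.part a) (C.parts.erase (C.part a)) = C.parts
    exact insert_erase (C.part_mem.2 ha)
  · rintro ⟨T, D⟩ hx
    have haT : a ∈ T := (mem_filter.1 (mem_sigma.1 hx).1).2
    have hTS : T ⊆ S := mem_powerset.1 (mem_filter.1 (mem_sigma.1 hx).1).1
    have h1 : (insertPart hTS ⟨a, haT⟩ D).part a = T :=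
      Finpartition.part_eq_of_mem _ (by show T ∈ insert T D.parts; exact mem_insert_self _ _) haT
    refine Sigma.ext h1 ?_
    have key : ∀ (T' : Finset β), T' = T → ∀ (E : Finpartition (S \ T')),
        E.parts = D.parts → HEq E D := by
      rintro T' rfl E hE; exact heq_of_eq (Finpartition.ext hE)
    refine key _ h1 _ ?_
    show ((insertPart hTS ⟨a, haT⟩ D).parts).erase _ = D.parts
    rw [h1]
    show (insert T D.parts).erase T = D.parts
    rw [erase_insert (not_mem_parts_sdiff ⟨a, haT⟩ D)]
  · intro C _
    simp [erasePart, insert_erase (C.part_mem.2 ha)]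


lemma cc_arith (n : ℕ) (hn : 1 ≤ n) :
    cc A n + (n - 1) • cc A (n - 1) = if n ≤ 1 then 1 else 0 := by
  match n, hn with
  | 1, _ => simp [cc]
  | (m + 2), _ =>
    have h2 : ¬ (m + 2 ≤ 1) := by omega
    rw [if_neg h2]
    simp only [cc, Nat.add_sub_cancel, nsmul_eq_mul]
    push_cast [Nat.factorial_succ]
    ring

lemma filter_card_one_eq {S : Finset β} {a : β} (ha : a ∈ S) :
    (S.powerset.filter (fun T => a ∈ T)).filter (fun T => (S \ T).card = 1)
      = (S.erase a).image (fun b => S.erase b) := by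
  ext T
  simp only [mem_filter, mem_powerset, mem_image, mem_erase]
  constructor
  · rintro ⟨⟨hTS, haT⟩, hcard⟩
    obtain ⟨b, hb⟩ := card_eq_one.1 hcard
    have hbS : b ∈ S := by
      have : b ∈ S \ T := hb ▸ mem_singleton_self b
      exact (mem_sdiff.1 this).1
    have hbT : b ∉ T := by
      have : b ∈ S \ T := hb ▸ mem_singleton_self b
      exact (mem_sdiff.1 this).2
    refine ⟨b, ⟨fun h => hbT (h ▸ haT), hbS⟩, ?_⟩
    rw [erase_eq, ← hb, sdiff_sdiff_right_self, inf_eq_inter, inter_eq_right.2 hTS]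
  · rintro ⟨b, ⟨hba, hbS⟩, rfl⟩
    refine ⟨⟨erase_subset _ _, mem_erase.2 ⟨fun h => hba h.symm, ha⟩⟩, ?_⟩
    rw [erase_eq, sdiff_sdiff_right_self, inf_eq_inter, inter_singleton_of_mem hbS,
      card_singleton]

lemma sum_cc (S : Finset β) :
    ∑ C : Finpartition S, ∏ Z ∈ C.parts, cc A Z.card
      = if S.card ≤ 1 then 1 else 0 := by
  induction S using Finset.strongInduction with
  | _ S IH =>
  rcases S.eq_empty_or_nonempty with rfl | ⟨a, ha⟩
  · have hu : ∀ C : Finpartition (∅ : Finset β), C.parts = ∅ := fun C =>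
      Finpartition.parts_eq_empty_iff.2 rfl
    rw [if_pos (by simp)]
    haveI : Unique (Finpartition (∅ : Finset β)) :=
      show Unique (Finpartition (⊥ : Finset β)) from inferInstance
    rw [Finset.sum_congr rfl (fun C _ => by rw [hu C, prod_empty] : ∀ C ∈ univ, _ = (1 : A)),
      sum_const, card_univ, Fintype.card_unique, one_smul]
  · rw [sum_finpartition_decomp ha (fun s => ∏ Z ∈ s, cc A Z.card)]
    have step1 : ∀ T ∈ S.powerset.filter (fun T => a ∈ T),
        (∑ D : Finpartition (S \ T), ∏ Z ∈ insert T D.parts, cc A Z.card)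
          = (if T = S then cc A S.card else 0)
            + (if (S \ T).card = 1 then cc A (S.card - 1) else 0) := by
      intro T hT
      have haT : a ∈ T := (mem_filter.1 hT).2
      have hTS : T ⊆ S := mem_powerset.1 (mem_filter.1 hT).1
      have hstep : (∑ D : Finpartition (S \ T), ∏ Z ∈ insert T D.parts, cc A Z.card)
          = cc A T.card * ∑ D : Finpartition (S \ T), ∏ Z ∈ D.parts, cc A Z.card := by
        rw [mul_sum]
        refine Finset.sum_congr rfl fun D _ => ?_
        rw [prod_insert (not_mem_parts_sdiff ⟨a, haT⟩ D)]
      rw [hstep, IH _ (Finset.sdiff_ssubset hTS ⟨a, haT⟩)]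
      rcases Nat.lt_or_ge (S \ T).card 2 with hlt | hge
      · interval_cases h : (S \ T).card
        · have hTS' : T = S := by
            have := sdiff_eq_empty_iff_subset.1 (card_eq_zero.1 h)
            exact subset_antisymm hTS this
          simp [hTS', hTS' ▸ h]
        · have hTne : T ≠ S := by
            intro h'; rw [h'] at h; simp at h
          have hTcard : T.card = S.card - 1 := by
            have h1 := Finset.card_sdiff_of_subset hTS
            have h2 := Finset.card_le_card hTS
            omega
          simp [hTne, h, hTcard]
      · have h1 : ¬ (S \ T).card ≤ 1 := by omega
        have h2 : T ≠ S := by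
          intro h'; rw [h'] at hge; simp at hge
        have h3 : ¬ (S \ T).card = 1 := by omega
        simp [h1, h2, h3]
    rw [Finset.sum_congr rfl step1, Finset.sum_add_distrib]
    have e1 : (∑ T ∈ S.powerset.filter (fun T => a ∈ T),
        if T = S then cc A S.card else 0) = cc A S.card := by
      rw [Finset.sum_ite_eq' (S.powerset.filter (fun T => a ∈ T)) S (fun _ => cc A S.card),
        if_pos (mem_filter.2 ⟨mem_powerset.2 subset_rfl, ha⟩)]
    have e2 : (∑ T ∈ S.powerset.filter (fun T => a ∈ T),
        if (S \ T).card = 1 then cc A (S.card - 1) else 0)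
          = (S.card - 1) • cc A (S.card - 1) := by
      rw [← Finset.sum_filter, filter_card_one_eq ha, Finset.sum_const]
      congr 1
      rw [Finset.card_image_of_injOn, card_erase_of_mem ha]
      intro b₁ h₁ b₂ h₂ hE
      simp only [Finset.mem_coe, mem_erase] at h₁
      by_contra hne
      have : b₁ ∈ S.erase b₂ := mem_erase.2 ⟨hne, h₁.2⟩
      have hE' : S.erase b₁ = S.erase b₂ := hE
      rw [← hE'] at this
      exact (mem_erase.1 this).1 rfl
    rw [e1, e2]
    exact cc_arith S.card (Nat.one_le_iff_ne_zero.2 (by simp [Finset.card_ne_zero_of_mem ha]))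


/-! ### Master re-summation lemma -/

lemma mem_parts_iff' {γ : Type*} [DecidableEq γ] {s : Finset γ} (C : Finpartition s) {x : γ} :
    x ∈ s ↔ ∃ Z ∈ C.parts, x ∈ Z := by
  conv_lhs => rw [← C.sup_parts]
  simp [Finset.mem_sup]

variable {Y : Finset β}

lemma sup_disjoint_of_ne {P' : Finpartition Y} (C : Finpartition P'.parts)
    {Z₁ Z₂ : Finset (Finset β)} (h₁ : Z₁ ∈ C.parts) (h₂ : Z₂ ∈ C.parts) (hne : Z₁ ≠ Z₂) :
    Disjoint (Z₁.sup id) (Z₂.sup id) := by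
  rw [Finset.disjoint_left]
  intro x hx₁ hx₂
  obtain ⟨X₁, hX₁, hx₁⟩ := Finset.mem_sup.1 hx₁
  obtain ⟨X₂, hX₂, hx₂⟩ := Finset.mem_sup.1 hx₂
  have hP₁ : X₁ ∈ P'.parts := C.le h₁ hX₁
  have hP₂ : X₂ ∈ P'.parts := C.le h₂ hX₂
  have hXX : X₁ = X₂ := P'.eq_of_mem_parts hP₁ hP₂ hx₁ hx₂
  subst hXX
  exact Finset.disjoint_left.1 (C.disjoint h₁ h₂ hne) hX₁ hX₂

lemma sup_nonempty_of_mem {P' : Finpartition Y} (C : Finpartition P'.parts)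
    {Z : Finset (Finset β)} (hZ : Z ∈ C.parts) : (Z.sup id).Nonempty := by
  obtain ⟨X, hX⟩ := C.nonempty_of_mem_parts hZ
  obtain ⟨x, hx⟩ := P'.nonempty_of_mem_parts (C.le hZ hX)
  exact ⟨x, Finset.mem_sup.2 ⟨X, hX, hx⟩⟩

/-- Declusterization: the coarse partition obtained from a partition `C` of the set of
parts of `P'`, each part of the coarse partition being the union of a cluster. -/
def decluster (P' : Finpartition Y) (C : Finpartition P'.parts) : Finpartition Y where
  parts := C.parts.image fun Z => Z.sup id
  supIndep := by
    rw [Finset.supIndep_iff_pairwiseDisjoint]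
    rintro W₁ hW₁ W₂ hW₂ hne
    simp only [coe_image, Set.mem_image, Finset.mem_coe] at hW₁ hW₂
    obtain ⟨Z₁, hZ₁, rfl⟩ := hW₁
    obtain ⟨Z₂, hZ₂, rfl⟩ := hW₂
    exact sup_disjoint_of_ne C hZ₁ hZ₂ (fun h => hne (by rw [h]))
  sup_parts := by
    apply le_antisymm
    · refine Finset.sup_le fun W hW => ?_
      obtain ⟨Z, hZ, rfl⟩ := Finset.mem_image.1 hW
      exact Finset.sup_le fun X hX => P'.le (C.le hZ hX)
    · intro x hx
      obtain ⟨X, hX, hxX⟩ := P'.exists_mem hx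
      obtain ⟨Z, hZ, hXZ⟩ := (mem_parts_iff' C).1 hX
      exact Finset.mem_sup.2 ⟨Z.sup id, Finset.mem_image_of_mem _ hZ,
        Finset.mem_sup.2 ⟨X, hXZ, hxX⟩⟩
  bot_notMem := by
    intro h
    obtain ⟨Z, hZ, hE⟩ := Finset.mem_image.1 h
    obtain ⟨x, hx⟩ := sup_nonempty_of_mem C hZ
    rw [hE] at hx
    simp at hx

lemma filter_sup_eq {P' : Finpartition Y} (C : Finpartition P'.parts)
    {Z : Finset (Finset β)} (hZ : Z ∈ C.parts) :
    P'.parts.filter (fun X => X ⊆ Z.sup id) = Z := by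
  ext X
  simp only [mem_filter]
  constructor
  · rintro ⟨hXP, hXW⟩
    obtain ⟨Z', hZ', hXZ'⟩ := (mem_parts_iff' C).1 hXP
    rcases eq_or_ne Z' Z with rfl | hne
    · exact hXZ'
    · obtain ⟨x, hx⟩ := P'.nonempty_of_mem_parts hXP
      have hx1 : x ∈ Z'.sup id := Finset.mem_sup.2 ⟨X, hXZ', hx⟩
      have hx2 : x ∈ Z.sup id := hXW hx
      exact absurd hx2 (Finset.disjoint_left.1 (sup_disjoint_of_ne C hZ' hZ hne) hx1)
  · intro hXZ
    exact ⟨C.le hZ hXZ, Finset.le_sup (f := id) hXZ⟩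

lemma decluster_sup {P' : Finpartition Y} (C : Finpartition P'.parts) {W : Finset β}
    (hW : W ∈ (decluster P' C).parts) :
    (P'.parts.filter (fun X => X ⊆ W)).sup id = W := by
  obtain ⟨Z, hZ, rfl⟩ := Finset.mem_image.1 hW
  rw [filter_sup_eq C hZ]

/-- Restriction of `P'` to a union of its parts. -/
def restrictFP (P' : Finpartition Y) (W : Finset β)
    (hsup : (P'.parts.filter (fun X => X ⊆ W)).sup id = W) : Finpartition W where
  parts := P'.parts.filter (fun X => X ⊆ W)
  supIndep := P'.supIndep.subset (filter_subset _ _)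
  sup_parts := hsup
  bot_notMem := fun h => P'.bot_notMem (mem_of_mem_filter _ h)


/-- The grouping of the parts of `P.bind p` according to the part of `P` they refine. -/
def clusterOf (P : Finpartition Y) (p : ∀ W ∈ P.parts, Finpartition W) :
    Finpartition ((P.bind p).parts) where
  parts := P.parts.attach.image fun W => (p W.1 W.2).parts
  supIndep := by
    rw [Finset.supIndep_iff_pairwiseDisjoint]
    rintro s hs s' hs' hne
    simp only [coe_image, Set.mem_image] at hs hs'
    obtain ⟨W, hW, rfl⟩ := hs
    obtain ⟨W', hW', rfl⟩ := hs'
    have hWne : W.1 ≠ W'.1 := by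
      intro h
      exact hne (by rw [Subtype.ext h])
    rw [Function.onFun, Finset.disjoint_left]
    intro X hX hX'
    obtain ⟨x, hx⟩ := (p W.1 W.2).nonempty_of_mem_parts hX
    have h1 : x ∈ W.1 := (p W.1 W.2).le hX hx
    have h2 : x ∈ W'.1 := (p W'.1 W'.2).le hX' hx
    exact Finset.disjoint_left.1 (P.disjoint W.2 W'.2 hWne) h1 h2
  sup_parts := by
    ext X
    rw [Finset.mem_sup, Finpartition.mem_bind]
    constructor
    · rintro ⟨s, hs, hXs⟩
      obtain ⟨W, hW, rfl⟩ := Finset.mem_image.1 hs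
      exact ⟨W.1, W.2, hXs⟩
    · rintro ⟨W, hW, hX⟩
      exact ⟨(p W hW).parts, Finset.mem_image_of_mem _ (mem_attach _ ⟨W, hW⟩), hX⟩
  bot_notMem := by
    intro h
    obtain ⟨W, hW, hE⟩ := Finset.mem_image.1 h
    exact P.ne_bot W.2 (Finpartition.parts_eq_empty_iff.1 hE)

lemma sigma_pi_ext {P₁ P₂ : Finpartition Y}
    {p₁ : ∀ W ∈ P₁.parts, Finpartition W} {p₂ : ∀ W ∈ P₂.parts, Finpartition W}
    (h : P₁ = P₂)
    (h2 : ∀ W (hW₁ : W ∈ P₁.parts) (hW₂ : W ∈ P₂.parts), p₁ W hW₁ = p₂ W hW₂) :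
    (⟨P₁, p₁⟩ : Σ P : Finpartition Y, ∀ W ∈ P.parts, Finpartition W) = ⟨P₂, p₂⟩ := by
  subst h
  exact congrArg _ (funext fun W => funext fun hW => h2 W hW hW)

lemma sigma_fp_ext {P₁ P₂ : Finpartition Y}
    {C₁ : Finpartition P₁.parts} {C₂ : Finpartition P₂.parts}
    (h : P₁ = P₂) (h2 : C₁.parts = C₂.parts) :
    (⟨P₁, C₁⟩ : Σ P : Finpartition Y, Finpartition P.parts) = ⟨P₂, C₂⟩ := by
  subst h
  exact congrArg _ (Finpartition.ext h2)


lemma attach_image_eq {γ δ : Type*} [DecidableEq γ] [DecidableEq δ] (s : Finset γ) (f : γ → δ) :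
    (s.attach.image fun x => f x.1) = s.image f := by
  rw [show (fun x : {x // x ∈ s} => f x.1) = f ∘ Subtype.val from rfl, ← Finset.image_image,
    Finset.attach_image_val]

set_option maxHeartbeats 2000000 in
/-- The master re-summation lemma: summing over a partition `P` of `Y` together with a
finer partition of each part of `P` is the same as summing over a (fine) partition `P` of
`Y` together with a grouping (partition) `C` of its set of parts, each group `Z ∈ C.parts`
corresponding to the coarse part `Z.sup id`. -/
lemma master (Y : Finset β) (u : ℕ → A) (k : Finset β → Finset (Finset β) → A) :
    ∑ P : Finpartition Y, u P.parts.card * ∏ W ∈ P.parts, (∑ q : Finpartition W, k W q.parts)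
      = ∑ P : Finpartition Y, ∑ C : Finpartition P.parts,
          u C.parts.card * ∏ Z ∈ C.parts, k (Z.sup id) Z := by
  have lhs1 : ∀ P : Finpartition Y,
      (∏ W ∈ P.parts, (∑ q : Finpartition W, k W q.parts))
        = ∑ p ∈ P.parts.pi (fun W => (univ : Finset (Finpartition W))),
            ∏ W ∈ P.parts.attach, k W.1 ((p W.1 W.2).parts) :=
    fun P => Finset.prod_sum _ _ _
  simp only [lhs1, Finset.mul_sum]
  have e1 : (∑ P : Finpartition Y, ∑ p ∈ P.parts.pi (fun W => (univ : Finset (Finpartition W))),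
        u P.parts.card * ∏ W ∈ P.parts.attach, k W.1 ((p W.1 W.2).parts))
      = ∑ x ∈ (univ : Finset (Finpartition Y)).sigma
            (fun P => P.parts.pi (fun W => (univ : Finset (Finpartition W)))),
          u x.1.parts.card * ∏ W ∈ x.1.parts.attach, k W.1 ((x.2 W.1 W.2).parts) :=
    (Finset.sum_sigma (f := fun (x : Σ P : Finpartition Y, ∀ W ∈ P.parts, Finpartition W) =>
      u x.1.parts.card * ∏ W ∈ x.1.parts.attach, k W.1 ((x.2 W.1 W.2).parts))
      (univ : Finset (Finpartition Y))
      (fun P : Finpartition Y => P.parts.pi (fun W => (univ : Finset (Finpartition W))))).symm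
  have e2 : (∑ P : Finpartition Y, ∑ C : Finpartition P.parts,
        u C.parts.card * ∏ Z ∈ C.parts, k (Z.sup id) Z)
      = ∑ x ∈ (univ : Finset (Finpartition Y)).sigma
            (fun P => (univ : Finset (Finpartition P.parts))),
          u x.2.parts.card * ∏ Z ∈ x.2.parts, k (Z.sup id) Z :=
    (Finset.sum_sigma (f := fun (x : Σ P : Finpartition Y, Finpartition P.parts) =>
      u x.2.parts.card * ∏ Z ∈ x.2.parts, k (Z.sup id) Z)
      (univ : Finset (Finpartition Y))
      (fun P : Finpartition Y => (univ : Finset (Finpartition P.parts)))).symm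
  rw [e1, e2]
  refine Finset.sum_bij'
    (i := fun x _ => ⟨x.1.bind x.2, clusterOf x.1 x.2⟩)
    (j := fun y _ => ⟨decluster y.1 y.2, fun W hW => restrictFP y.1 W (decluster_sup y.2 hW)⟩)
    ?_ ?_ ?_ ?_ ?_
  · intro x _
    exact mem_sigma.2 ⟨mem_univ _, mem_univ _⟩
  · intro y _
    exact mem_sigma.2 ⟨mem_univ _, Finset.mem_pi.2 fun W hW => mem_univ _⟩
  -- left inverse
  · rintro ⟨P, p⟩ _
    have hP : decluster (P.bind p) (clusterOf P p) = P := by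
      apply Finpartition.ext
      show ((clusterOf P p).parts.image fun Z => Z.sup id) = P.parts
      show ((P.parts.attach.image fun W => (p W.1 W.2).parts).image fun Z => Z.sup id) = P.parts
      rw [Finset.image_image]
      have : ((fun Z : Finset (Finset β) => Z.sup id) ∘ fun W : {x // x ∈ P.parts} =>
          (p W.1 W.2).parts) = fun W : {x // x ∈ P.parts} => W.1 := by
        funext W
        exact (p W.1 W.2).sup_parts
      rw [this]
      simp
    refine sigma_pi_ext hP ?_
    intro W hW₁ hW₂
    apply Finpartition.ext
    show (P.bind p).parts.filter (fun X => X ⊆ W) = (p W hW₂).parts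
    ext X
    simp only [mem_filter, Finpartition.mem_bind]
    constructor
    · rintro ⟨⟨W', hW', hXW'⟩, hXW⟩
      rcases eq_or_ne W' W with rfl | hne
      · exact hXW'
      · obtain ⟨x, hx⟩ := (p W' hW').nonempty_of_mem_parts hXW'
        have h1 : x ∈ W' := (p W' hW').le hXW' hx
        have h2 : x ∈ W := hXW hx
        exact absurd h2 (Finset.disjoint_left.1 (P.disjoint hW' hW₂ hne) h1)
    · intro hX
      exact ⟨⟨W, hW₂, hX⟩, (p W hW₂).le hX⟩
  -- right inverse
  · rintro ⟨P', C⟩ _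
    have hbind : (decluster P' C).bind
        (fun W hW => restrictFP P' W (decluster_sup C hW)) = P' := by
      apply Finpartition.ext
      ext X
      rw [Finpartition.mem_bind]
      constructor
      · rintro ⟨W, hW, hX⟩
        exact (mem_filter.1 hX).1
      · intro hX
        obtain ⟨Z, hZ, hXZ⟩ := (mem_parts_iff' C).1 hX
        refine ⟨Z.sup id, Finset.mem_image_of_mem _ hZ, ?_⟩
        exact mem_filter.2 ⟨hX, Finset.le_sup (f := id) hXZ⟩
    refine sigma_fp_ext hbind ?_
    show ((decluster P' C).parts.attach.image
        fun W => (restrictFP P' W.1 (decluster_sup C W.2)).parts) = C.parts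
    have h1 : ((decluster P' C).parts.attach.image
        fun W => (restrictFP P' W.1 (decluster_sup C W.2)).parts)
          = (decluster P' C).parts.image fun W => P'.parts.filter (fun X => X ⊆ W) :=
      attach_image_eq (decluster P' C).parts (fun W => P'.parts.filter (fun X => X ⊆ W))
    rw [h1]
    show ((C.parts.image fun Z => Z.sup id).image
        fun W => P'.parts.filter (fun X => X ⊆ W)) = C.parts
    rw [Finset.image_image]
    refine Eq.trans (Finset.image_congr ?_) Finset.image_id
    intro Z hZ
    exact filter_sup_eq C hZ
  -- summand equality
  · rintro ⟨P, p⟩ _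
    have hinj : ∀ W ∈ P.parts.attach, ∀ W' ∈ P.parts.attach,
        (p W.1 W.2).parts = (p W'.1 W'.2).parts → W = W' := by
      intro W _ W' _ h
      have : W.1 = W'.1 := by
        rw [← (p W.1 W.2).sup_parts, ← (p W'.1 W'.2).sup_parts, h]
      exact Subtype.ext this
    have hcard : (clusterOf P p).parts.card = P.parts.card := by
      show (P.parts.attach.image fun W => (p W.1 W.2).parts).card = P.parts.card
      rw [Finset.card_image_of_injOn fun W hW W' hW' h => hinj W (by simpa using hW) W'
        (by simpa using hW') h, Finset.card_attach]
    have hprod : (∏ Z ∈ (clusterOf P p).parts, k (Z.sup id) Z)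
        = ∏ W ∈ P.parts.attach, k W.1 ((p W.1 W.2).parts) := by
      show (∏ Z ∈ P.parts.attach.image fun W => (p W.1 W.2).parts, k (Z.sup id) Z)
        = ∏ W ∈ P.parts.attach, k W.1 ((p W.1 W.2).parts)
      rw [Finset.prod_image hinj]
      refine Finset.prod_congr rfl fun W _ => ?_
      rw [(p W.1 W.2).sup_parts]
    rw [hcard, hprod]


/-! ### Cluster expansion and its logarithm -/

/-- Cluster expansion transform. -/
noncomputable def clusterExp (f : Finset β → A) (Y : Finset β) : A :=
  ∑ P : Finpartition Y, ∏ X ∈ P.parts, f X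

/-- Inverse (logarithmic) cluster transform. -/
noncomputable def clusterLog (F : Finset β → A) (Y : Finset β) : A :=
  ∑ P : Finpartition Y, cc A P.parts.card * ∏ X ∈ P.parts, F X

lemma prod_parts {γ : Type*} [DecidableEq γ] {s : Finset γ} (C : Finpartition s) (g : γ → A) :
    ∏ Z ∈ C.parts, ∏ X ∈ Z, g X = ∏ X ∈ s, g X := by
  conv_rhs => rw [← C.sup_parts, Finset.sup_eq_biUnion]
  rw [Finset.prod_biUnion C.disjoint]
  rfl

lemma sum_indicator_one_part (F : Finset β → A) {Y : Finset β} (hY : Y.Nonempty) :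
    ∑ P : Finpartition Y, (if P.parts.card ≤ 1 then (1 : A) else 0) * ∏ X ∈ P.parts, F X
      = F Y := by
  have hne : Y ≠ ⊥ := by simpa [Finset.bot_eq_empty] using hY.ne_empty
  rw [Fintype.sum_eq_single (Finpartition.indiscrete hne)]
  · have hparts : (Finpartition.indiscrete hne : Finpartition Y).parts = {Y} := rfl
    rw [hparts]
    simp
  · intro P hP
    have hcn : ¬ P.parts.card ≤ 1 := by
      intro hle
      have hc1 : P.parts.card = 1 :=
        le_antisymm hle (Finset.card_pos.2 (P.parts_nonempty hne))
      obtain ⟨X, hX⟩ := Finset.card_eq_one.1 hc1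
      have hXY : X = Y := by
        have := P.sup_parts
        rw [hX] at this
        simpa using this
      exact hP (Finpartition.ext (by rw [hX, hXY]; rfl))
    rw [if_neg hcn, zero_mul]

/-- The exponential (cluster expansion) transform inverts the logarithmic one. -/
lemma exp_log (F : Finset β → A) {Y : Finset β} (hY : Y.Nonempty) :
    clusterExp (fun W => clusterLog F W) Y = F Y := by
  unfold clusterExp clusterLog
  have h := master Y (fun _ => (1 : A)) (fun W s => cc A s.card * ∏ X ∈ s, F X)
  simp only [one_mul] at h
  rw [h]
  have h2 : ∀ P : Finpartition Y,
      (∑ C : Finpartition P.parts, ∏ Z ∈ C.parts, cc A Z.card * ∏ X ∈ Z, F X)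
        = (if P.parts.card ≤ 1 then (1 : A) else 0) * ∏ X ∈ P.parts, F X := by
    intro P
    have h3 : ∀ C : Finpartition P.parts,
        (∏ Z ∈ C.parts, cc A Z.card * ∏ X ∈ Z, F X)
          = (∏ Z ∈ C.parts, cc A Z.card) * ∏ X ∈ P.parts, F X := by
      intro C
      rw [Finset.prod_mul_distrib, prod_parts C F]
    rw [Finset.sum_congr rfl fun C _ => h3 C, ← Finset.sum_mul, sum_cc]
  rw [Finset.sum_congr rfl fun P _ => h2 P]
  exact sum_indicator_one_part F hY


/-- The cumulant dynamics is the conjugation of the multiplication dynamics by the cluster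
expansion transform. -/
lemma clusterCumulant_eq_log (G : Finset β → ℝ → (A →+ A)) (t : ℝ) (f : Finset β → A)
    (Y : Finset β) :
    clusterCumulantMap G t f Y = clusterLog (fun W => G W t (clusterExp f W)) Y := by
  have h1 : clusterCumulantMap G t f Y
      = ∑ P : Finpartition Y, ∑ C : Finpartition P.parts,
          cc A C.parts.card * ∏ Z ∈ C.parts, G (Z.sup id) t (∏ X ∈ Z, f X) := rfl
  have h2 := master Y (cc A) (fun W s => G W t (∏ X ∈ s, f X))
  rw [h1, ← h2]
  unfold clusterLog clusterExp
  refine Finset.sum_congr rfl fun P _ => ?_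
  congr 1
  refine Finset.prod_congr rfl fun W _ => ?_
  exact (map_sum (G W t) _ _).symm

end ClusterProofAux

/-- Group property of the nonlinear correlation dynamics: if the evolution groups
`G X` satisfy the group property `G X (t₁+t₂) = G X t₁ ∘ G X t₂`, then
`𝔄_{t₁}(𝔄_{t₂}(f)) = 𝔄_{t₁+t₂}(f)` for all real `t₁, t₂`. -/
theorem clusterCumulantMap_group_property
    {α A : Type*} [DecidableEq α] [CommRing A]
    (G : Finset α → ℝ → (A →+ A))
    (hG : ∀ (X : Finset α) (t₁ t₂ : ℝ) (a : A), G X (t₁ + t₂) a = G X t₁ (G X t₂ a))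
    (f : Finset α → A) (t₁ t₂ : ℝ) :
    ∀ Y : Finset α, Y.Nonempty →
      clusterCumulantMap G t₁ (clusterCumulantMap G t₂ f) Y =
        clusterCumulantMap G (t₁ + t₂) f Y := by
  intro Y hY
  open ClusterProofAux in
  have hExp : ∀ (t : ℝ) (g : Finset α → A) (W : Finset α), W.Nonempty →
      clusterExp (clusterCumulantMap G t g) W = G W t (clusterExp g W) := by
    intro t g W hW
    have h1 : clusterExp (clusterCumulantMap G t g) W
        = clusterExp (fun V => clusterLog (fun V' => G V' t (clusterExp g V')) V) W := by
      unfold clusterExp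
      refine Finset.sum_congr rfl fun P _ => Finset.prod_congr rfl fun X _ => ?_
      exact ClusterProofAux.clusterCumulant_eq_log G t g X
    rw [h1, ClusterProofAux.exp_log _ hW]
  rw [ClusterProofAux.clusterCumulant_eq_log G t₁ (clusterCumulantMap G t₂ f) Y,
    ClusterProofAux.clusterCumulant_eq_log G (t₁ + t₂) f Y]
  unfold ClusterProofAux.clusterLog
  refine Finset.sum_congr rfl fun P _ => ?_
  congr 1
  refine Finset.prod_congr rfl fun W hW => ?_
  show G W t₁ (ClusterProofAux.clusterExp (clusterCumulantMap G t₂ f) W)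
      = G W (t₁ + t₂) (ClusterProofAux.clusterExp f W)
  rw [hExp t₂ f W (P.nonempty_of_mem_parts hW), ← hG W t₁ t₂]
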